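/- Let r ≤ n, let N ∈ ℝ^{n×r}, let Λ_w be an r×r diagonal matrix with positive diagonal entries, and set Ξ = C^{-1/2} N Λ_w. Suppose Ξ = U Λ_ξ Vᵀ with U ∈ ℝ^{n×r}, V ∈ ℝ^{r×r} satisfying Uᵀ U = Vᵀ V = I_r and Λ_ξ = diag(ξ_1,…,ξ_r) with ξ_i ≥ 0 (a singular value decomposition of Ξ). Then a_* = Λ_σ^{-1} C^{-1/2} U Vᵀ satisfies a_*ᵀ Σ a_* = I_r and tr(a_*ᵀ Λ_σ N Λ_w) = Σ_{i=1}^r ξ_i. -/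

import Mathlib

open Matrix BigOperators

/-- The positive semidefinite square root of a positive semidefinite matrix
(the definition `Matrix.PosSemidef.sqrt` of Mathlib, December 2024, since removed). -/
noncomputable def Matrix.PosSemidef.sqrt {n : Type*} [Fintype n] [DecidableEq n] {𝕜 : Type*}
    [RCLike 𝕜] [PartialOrder 𝕜] {A : Matrix n n 𝕜} (hA : A.PosSemidef) : Matrix n n 𝕜 :=
  hA.1.eigenvectorUnitary.1 * diagonal ((↑) ∘ (Real.sqrt ∘ hA.1.eigenvalues)) *
  (star hA.1.eigenvectorUnitary : Matrix n n 𝕜)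

/-- **Proxy-VAR OASIS attainment.** With `Ξ = C^{-1/2} N Λ_w` and an SVD
`Ξ = U Λ_ξ Vᵀ` (`Uᵀ U = Vᵀ V = I_r`, `ξ_i ≥ 0`), the matrix
`a_* = Λ_σ⁻¹ C^{-1/2} U Vᵀ` satisfies `a_*ᵀ Σ a_* = I_r` and
`tr(a_*ᵀ Λ_σ N Λ_w) = Σ_i ξ_i`. -/

theorem stmt_8 {n r : ℕ} (hr : r ≤ n)
    (S : Matrix (Fin n) (Fin n) ℝ) (hS : S.PosDef)
    (Ls : Matrix (Fin n) (Fin n) ℝ)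
    (hLs : Ls = Matrix.diagonal (fun i => Real.sqrt (S i i)))
    (C : Matrix (Fin n) (Fin n) ℝ) (hC : C = Ls⁻¹ * S * Ls⁻¹)
    (hCpd : C.PosDef)
    (N : Matrix (Fin n) (Fin r) ℝ)
    (w : Fin r → ℝ) (hw : ∀ i, 0 < w i)
    (Lw : Matrix (Fin r) (Fin r) ℝ) (hLw : Lw = Matrix.diagonal w)
    (Xi : Matrix (Fin n) (Fin r) ℝ)
    (hXi : Xi = (hCpd.posSemidef.sqrt)⁻¹ * N * Lw)
    (U : Matrix (Fin n) (Fin r) ℝ) (V : Matrix (Fin r) (Fin r) ℝ)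
    (ξ : Fin r → ℝ) (hξ : ∀ i, 0 ≤ ξ i)
    (hU : Uᵀ * U = 1) (hV : Vᵀ * V = 1)
    (hSVD : Xi = U * Matrix.diagonal ξ * Vᵀ)
    (astar : Matrix (Fin n) (Fin r) ℝ)
    (hastar : astar = Ls⁻¹ * (hCpd.posSemidef.sqrt)⁻¹ * U * Vᵀ) :
    astarᵀ * S * astar = 1 ∧ (astarᵀ * Ls * N * Lw).trace = ∑ i, ξ i := by
  have hdiag : ∀ i, 0 < S i i := fun i => by
    exact hS.diag_pos
  have hLsPD : Ls.PosDef := hLs ▸ Matrix.PosDef.diagonal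
    (fun i => Real.sqrt_pos.mpr (hdiag i))
  have hLsUnit : IsUnit Ls.det := hLsPD.det_pos.ne'.isUnit
  set Q := hCpd.posSemidef.sqrt with hQ
  have hQQ : Q * Q = C := by
    have hC := hCpd.posSemidef
    have hU : (star hC.1.eigenvectorUnitary : Matrix (Fin n) (Fin n) ℝ) * hC.1.eigenvectorUnitary.1 = 1 :=
      Matrix.UnitaryGroup.star_mul_self _
    have hs := hC.1.spectral_theorem
    rw [Unitary.conjStarAlgAut_apply] at hs
    rw [hQ]
    unfold Matrix.PosSemidef.sqrt
    conv_rhs => rw [hs]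
    simp only [Matrix.mul_assoc]
    rw [← Matrix.mul_assoc (star _ : Matrix (Fin n) (Fin n) ℝ), hU, Matrix.one_mul,
      ← Matrix.mul_assoc (diagonal _), diagonal_mul_diagonal]
    congr 3
    funext i
    simp [Real.mul_self_sqrt (hC.eigenvalues_nonneg i)]
  have hQdet : IsUnit Q.det := by
    have hm : Q.det * Q.det = C.det := by rw [← Matrix.det_mul, hQQ]
    exact isUnit_iff_ne_zero.mpr fun h => hCpd.det_pos.ne' (by rw [← hm, h, zero_mul])
  have hQT : Qᵀ = Q := by
    rw [hQ]
    unfold Matrix.PosSemidef.sqrt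
    simp only [Matrix.star_eq_conjTranspose, Matrix.conjTranspose_eq_transpose_of_trivial, Matrix.transpose_mul,
      Matrix.transpose_transpose, Matrix.diagonal_transpose, Matrix.mul_assoc]
  have hLsT : Lsᵀ = Ls := by rw [hLs, Matrix.diagonal_transpose]
  have hQinv : Q⁻¹ * Q = 1 := Matrix.nonsing_inv_mul _ hQdet
  have hQinv' : Q * Q⁻¹ = 1 := Matrix.mul_nonsing_inv _ hQdet
  have hLsinv : Ls⁻¹ * Ls = 1 := Matrix.nonsing_inv_mul _ hLsUnit
  have hLsinv' : Ls * Ls⁻¹ = 1 := Matrix.mul_nonsing_inv _ hLsUnit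
  have hVV : V * Vᵀ = 1 := mul_eq_one_comm.mp hV
  have haT : astarᵀ = V * Uᵀ * Q⁻¹ * Ls⁻¹ := by
    rw [hastar]
    simp [Matrix.transpose_mul, Matrix.transpose_nonsing_inv, hQT, hLsT, Matrix.mul_assoc]
  have hSdec : S = Ls * (Q * Q) * Ls := by
    rw [hQQ, hC, ← Matrix.mul_assoc, ← Matrix.mul_assoc, hLsinv', Matrix.one_mul,
      Matrix.mul_assoc, hLsinv, Matrix.mul_one]
  constructor
  · rw [haT, hastar, hSdec]
    calc V * Uᵀ * Q⁻¹ * Ls⁻¹ * (Ls * (Q * Q) * Ls) * (Ls⁻¹ * Q⁻¹ * U * Vᵀ)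
        = V * (Uᵀ * ((Q⁻¹ * ((Ls⁻¹ * Ls) * Q)) * ((Q * (Ls * Ls⁻¹)) * Q⁻¹) * U)) * Vᵀ := by
          simp only [Matrix.mul_assoc]
      _ = 1 := by
          rw [hLsinv, hLsinv', Matrix.one_mul, Matrix.mul_one, hQinv, hQinv', Matrix.one_mul,
            Matrix.one_mul, hU, Matrix.mul_one, hVV]
  · have key : astarᵀ * Ls * N * Lw = V * Matrix.diagonal ξ * Vᵀ := by
      rw [haT]
      calc V * Uᵀ * Q⁻¹ * Ls⁻¹ * Ls * N * Lw
          = V * (Uᵀ * (Q⁻¹ * N * Lw)) := by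
            rw [Matrix.mul_assoc (V * Uᵀ * Q⁻¹), hLsinv, Matrix.mul_one]
            simp only [Matrix.mul_assoc]
        _ = V * (Uᵀ * Xi) := by rw [hXi]
        _ = V * Matrix.diagonal ξ * Vᵀ := by
            rw [hSVD]
            simp only [← Matrix.mul_assoc]
            rw [Matrix.mul_assoc V Uᵀ U, hU, Matrix.mul_one]
    rw [key, Matrix.mul_assoc, Matrix.trace_mul_comm, Matrix.mul_assoc, hV, Matrix.mul_one,
      Matrix.trace_diagonal]
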